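/- For d ≥ 0 and n ≥ d, the coefficient of x^n in x^d * C(x)^(d+1), where C(x) is the Catalan generating function, equals ((d+1)/(n+1)) * C(2n-d, n). -/

import Mathlib

open PowerSeries

/-- The Catalan generating function `C(x) = ∑ catalan n * x^n`. -/
noncomputable def catalanGF : PowerSeries ℚ := PowerSeries.mk fun n => (catalan n : ℚ)

lemma catalanGF_funEq : catalanGF = 1 + PowerSeries.X * catalanGF ^ 2 := by
  ext n
  cases n with
  | zero => simp [catalanGF]
  | succ n =>
    rw [map_add, PowerSeries.coeff_succ_X_mul]
    simp only [catalanGF, PowerSeries.coeff_mk, PowerSeries.coeff_one, Nat.succ_ne_zero,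
      if_false, zero_add, sq, PowerSeries.coeff_mul, catalan_succ']
    push_cast
    rfl

lemma pow_funEq (d : ℕ) :
    catalanGF ^ (d + 1) = catalanGF ^ d + PowerSeries.X * catalanGF ^ (d + 2) := by
  calc catalanGF ^ (d + 1) = catalanGF ^ d * catalanGF := by ring
  _ = catalanGF ^ d * (1 + PowerSeries.X * catalanGF ^ 2) := by rw [← catalanGF_funEq]
  _ = catalanGF ^ d + PowerSeries.X * catalanGF ^ (d + 2) := by ring

noncomputable def B (d m : ℕ) : ℚ := (d + 1) * (Nat.choose (2 * m + d) m) / (m + d + 1)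

lemma coeff_zero (d : ℕ) : PowerSeries.coeff 0 (catalanGF ^ (d + 1)) = 1 := by
  rw [PowerSeries.coeff_zero_eq_constantCoeff, map_pow]
  simp [catalanGF, PowerSeries.constantCoeff_mk]

lemma B_zero (d : ℕ) : B d 0 = 1 := by
  simp only [B, Nat.mul_zero, Nat.zero_add, Nat.choose_zero_right, Nat.cast_one, mul_one,
    Nat.cast_zero, zero_add]
  rw [div_self]
  positivity

lemma B_zero_left (m : ℕ) : B 0 m = catalan m := by
  have h := succ_mul_catalan_eq_centralBinom m
  have : ((m:ℚ) + 1) * catalan m = Nat.choose (2 * m) m := by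
    rw [← Nat.centralBinom]
    exact_mod_cast congrArg (Nat.cast (R := ℚ)) h
  simp only [B, Nat.add_zero, Nat.cast_zero, zero_add, one_mul]
  rw [← this]
  field_simp
  ring

lemma B_rec (d m : ℕ) : B (d + 1) (m + 1) = B d (m + 1) + B (d + 2) m := by
  have N : ℕ := 2 * m + d + 2
  -- key nat identity: (m+1) * C(N, m+1) = (N - m) * C(N, m), N = 2m+d+2
  have key : Nat.choose (2 * m + d + 2) (m + 1) * (m + 1)
      = Nat.choose (2 * m + d + 2) m * (m + d + 2) := by
    have := Nat.choose_succ_right_eq (2 * m + d + 2) m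
    rwa [show 2 * m + d + 2 - m = m + d + 2 by omega] at this
  have pascal : Nat.choose (2 * m + d + 3) (m + 1)
      = Nat.choose (2 * m + d + 2) m + Nat.choose (2 * m + d + 2) (m + 1) :=
    Nat.choose_succ_succ (2 * m + d + 2) m
  have keyQ : (Nat.choose (2 * m + d + 2) (m + 1) : ℚ) * (m + 1)
      = (Nat.choose (2 * m + d + 2) m : ℚ) * (m + d + 2) := by exact_mod_cast key
  simp only [B]
  rw [show 2 * (m + 1) + (d + 1) = 2 * m + d + 3 by ring,
      show 2 * (m + 1) + d = 2 * m + d + 2 by ring,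
      show 2 * m + (d + 2) = 2 * m + d + 2 by ring, pascal]
  push_cast
  field_simp
  nlinarith [keyQ]

lemma coeff_eq_B : ∀ m d : ℕ, PowerSeries.coeff m (catalanGF ^ (d + 1)) = B d m := by
  intro m
  induction m using Nat.strong_induction_on with
  | _ m ih =>
    intro d
    cases m with
    | zero => rw [coeff_zero, B_zero]
    | succ m =>
      induction d with
      | zero =>
        rw [B_zero_left]
        simp [catalanGF]
      | succ d ihd =>
        rw [pow_funEq (d + 1), map_add, PowerSeries.coeff_succ_X_mul, ihd,
          show d + 1 + 2 = (d + 2) + 1 from rfl, ih m (Nat.lt_succ_self m), B_rec]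

theorem coeff_xd_catalanGF_pow (d n : ℕ) (hdn : d ≤ n) :
    PowerSeries.coeff n (PowerSeries.X ^ d * catalanGF ^ (d + 1))
      = ((d + 1 : ℚ) / (n + 1)) * (Nat.choose (2 * n - d) n) := by
  obtain ⟨m, rfl⟩ : ∃ m, n = m + d := ⟨n - d, by omega⟩
  rw [PowerSeries.coeff_X_pow_mul, coeff_eq_B, B]
  rw [show 2 * (m + d) - d = 2 * m + d by omega,
      show (2 * m + d).choose (m + d) = (2 * m + d).choose m by
        rw [← Nat.choose_symm (by omega : m + d ≤ 2 * m + d)]; congr 1; omega]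
  push_cast
  ring
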